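/- arXiv:1301.7094 — 4 statements merged into one kernel-verified Lean document; each statement's English description precedes it below -/
import Mathlib

section
/- Let A be an n×n integer matrix and suppose a monic polynomial p ∈ ℤ[x] of degree d with odd constant coefficient divides the characteristic polynomial of A. Then for every natural number k, the rank over 𝔽₂ of (A mod 2)^k is at least d. -/
open Polynomial Module LinearMap

lemma mulVecLin_eq_toLinAlgEquiv' {R : Type*} [CommSemiring R] {m : ℕ}
    (M : Matrix (Fin m) (Fin m) R) : M.mulVecLin = Matrix.toLinAlgEquiv' M := by
  ext v
  simp [Matrix.toLinAlgEquiv'_apply, Matrix.mulVecLin_apply]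

theorem rank_mod_two_pow_ge_of_odd_constant_divisor
    (n : ℕ) (A : Matrix (Fin n) (Fin n) ℤ) (p : Polynomial ℤ) (d : ℕ)
    (hmonic : p.Monic) (hdeg : p.natDegree = d) (hodd : Odd (p.coeff 0))
    (hdvd : p ∣ A.charpoly) :
    ∀ k : ℕ, d ≤ ((A.map (Int.cast : ℤ → ZMod 2)) ^ k).rank := by
  intro k
  obtain ⟨q, hq⟩ := hdvd
  set c : ℤ →+* ZMod 2 := Int.castRingHom (ZMod 2)
  have hn : A.charpoly.natDegree = n := by
    rw [A.charpoly_natDegree_eq_dim, Fintype.card_fin]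
  have hq0 : q ≠ 0 := by
    rintro rfl
    rw [mul_zero] at hq
    exact A.charpoly_monic.ne_zero hq
  have hdn : d + q.natDegree = n := by
    have h := Polynomial.natDegree_mul hmonic.ne_zero hq0
    rw [← hq, hn, hdeg] at h
    omega
  set B : Matrix (Fin n) (Fin n) (ZMod 2) := A.map (Int.cast : ℤ → ZMod 2) with hB
  have hBc : B.charpoly = A.charpoly.map c := Matrix.charpoly_map A c
  set P := p.map c with hP
  set Q := q.map c with hQdef
  have hPQ : B.charpoly = P * Q := by rw [hBc, hq, Polynomial.map_mul]
  have hP0 : P.coeff 0 ≠ 0 := by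
    obtain ⟨m, hm⟩ := hodd
    have h1 : P.coeff 0 = ((p.coeff 0 : ℤ) : ZMod 2) := by
      simp [hP, Polynomial.coeff_map, c]
    rw [h1, hm]
    push_cast
    rw [show ((2 : ZMod 2)) = 0 from rfl]
    simp
  have hPne : P ≠ 0 := (hmonic.map c).ne_zero
  have hQne : Q ≠ 0 := by
    rintro h
    rw [h, mul_zero] at hPQ
    exact B.charpoly_monic.ne_zero hPQ
  have hntd : B.charpoly.natTrailingDegree ≤ n - d := by
    rw [hPQ, Polynomial.natTrailingDegree_mul hPne hQne]
    have h1 : P.natTrailingDegree = 0 :=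
      Polynomial.natTrailingDegree_eq_zero.mpr (Or.inr hP0)
    have h2 : Q.natTrailingDegree ≤ n - d := by
      have h3 := Q.natTrailingDegree_le_natDegree
      have h4 : Q.natDegree ≤ q.natDegree := Polynomial.natDegree_map_le
      omega
    omega
  set φ : Module.End (ZMod 2) (Fin n → ZMod 2) := Matrix.toLinAlgEquiv' B with hφ
  have hφch : φ.charpoly = B.charpoly := by
    rw [← LinearMap.charpoly_toMatrix φ (Pi.basisFun (ZMod 2) (Fin n)),
      LinearMap.toMatrix_eq_toMatrix']
    congr 1
    exact LinearMap.toMatrixAlgEquiv'_toLinAlgEquiv' B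
  have hker : LinearMap.ker (φ ^ k) ≤ φ.maxGenEigenspace 0 := by
    intro x hx
    rw [Module.End.mem_maxGenEigenspace]
    refine ⟨k, ?_⟩
    simpa using hx
  have hfin : Module.finrank (ZMod 2) (LinearMap.ker (φ ^ k)) ≤ n - d := by
    calc Module.finrank (ZMod 2) (LinearMap.ker (φ ^ k))
        ≤ Module.finrank (ZMod 2) (φ.maxGenEigenspace 0) := Submodule.finrank_mono hker
      _ = (φ.charpoly).natTrailingDegree := LinearMap.finrank_maxGenEigenspace_zero_eq φ
      _ ≤ n - d := by rw [hφch]; exact hntd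
  have hpow : (B ^ k).mulVecLin = φ ^ k := by
    rw [hφ, ← map_pow (Matrix.toLinAlgEquiv' :
      Matrix (Fin n) (Fin n) (ZMod 2) ≃ₐ[ZMod 2] _) B k]
    exact mulVecLin_eq_toLinAlgEquiv' _
  have hrn := LinearMap.finrank_range_add_finrank_ker (φ ^ k)
  rw [Module.finrank_pi (ZMod 2)] at hrn
  simp only [Fintype.card_fin] at hrn
  have hrank : (B ^ k).rank = Module.finrank (ZMod 2) (LinearMap.range (φ ^ k)) := by
    rw [Matrix.rank, hpow]
  rw [hrank]
  omega
end

section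
/- Let X and Y be m×m integer matrices and set M = [[X, Y], [Y, X]]. Suppose a monic polynomial p ∈ ℤ[x] of degree d with odd constant coefficient divides the characteristic polynomial of X+Y. Then for every natural number k, rank(M^k) over ℚ is at least 2d. In particular, the eventual rank of M (the rank of M^{2m}) is at least 2d. -/
open Polynomial Matrix LinearMap Module

/-- The product of two submodules is equivalent to their direct product. -/
private noncomputable def prodSubEquiv {K V W : Type*} [Field K] [AddCommGroup V] [AddCommGroup W]
    [Module K V] [Module K W] (p : Submodule K V) (q : Submodule K W) :
    (p.prod q) ≃ₗ[K] p × q where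
  toFun x := (⟨x.1.1, x.2.1⟩, ⟨x.1.2, x.2.2⟩)
  map_add' := by intros; rfl
  map_smul' := by intros; rfl
  invFun y := ⟨(y.1.1, y.2.1), ⟨y.1.2, y.2.2⟩⟩
  left_inv := by intro x; rfl
  right_inv := by intro y; rfl

private lemma range_prodMap' {K V W : Type*} [Field K] [AddCommGroup V] [AddCommGroup W]
    [Module K V] [Module K W] (f : V →ₗ[K] V) (g : W →ₗ[K] W) :
    LinearMap.range (f.prodMap g) = (LinearMap.range f).prod (LinearMap.range g) := by
  ext ⟨x, y⟩
  constructor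
  · rintro ⟨⟨a, b⟩, h⟩
    simp only [LinearMap.prodMap_apply, Prod.mk.injEq] at h
    exact ⟨⟨a, h.1⟩, ⟨b, h.2⟩⟩
  · rintro ⟨⟨a, ha⟩, ⟨b, hb⟩⟩
    exact ⟨(a, b), by simp [ha, hb]⟩

/-- The rank of a block diagonal matrix is the sum of the ranks of the blocks. -/
private lemma rank_fromBlocks_diag {m : ℕ} (A B : Matrix (Fin m) (Fin m) ℚ) :
    (Matrix.fromBlocks A 0 0 B).rank = A.rank + B.rank := by
  classical
  set b := Pi.basisFun ℚ (Fin m)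
  set f := Matrix.toLin b b A with hf
  set g := Matrix.toLin b b B with hg
  have hblock : Matrix.fromBlocks A 0 0 B
      = LinearMap.toMatrix (b.prod b) (b.prod b) (f.prodMap g) := by
    rw [LinearMap.toMatrix_prodMap, hf, hg, LinearMap.toMatrix_toLin, LinearMap.toMatrix_toLin]
  rw [hblock, Matrix.rank_eq_finrank_range_toLin _ (b.prod b) (b.prod b),
    Matrix.toLin_toMatrix, range_prodMap',
    Matrix.rank_eq_finrank_range_toLin A b b, Matrix.rank_eq_finrank_range_toLin B b b]
  exact ((prodSubEquiv _ _).finrank_eq).trans (Module.finrank_prod)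

/-- Any power of a matrix has rank at least `n` minus the trailing degree of the
characteristic polynomial (= algebraic multiplicity of the eigenvalue `0`). -/
private lemma rank_pow_ge_ntd {n : ℕ} (A : Matrix (Fin n) (Fin n) ℚ) (k : ℕ) :
    n - A.charpoly.natTrailingDegree ≤ (A ^ k).rank := by
  classical
  set b := Pi.basisFun ℚ (Fin n)
  set φ : Module.End ℚ (Fin n → ℚ) := Matrix.toLinAlgEquiv b A with hφ
  have htoLin : ∀ M : Matrix (Fin n) (Fin n) ℚ,
      Matrix.toLin b b M = Matrix.toLinAlgEquiv b M := fun _ => rfl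
  have hrank : (A ^ k).rank = finrank ℚ (LinearMap.range (φ ^ k)) := by
    rw [Matrix.rank_eq_finrank_range_toLin _ b b, htoLin, map_pow]
  have hmat : LinearMap.toMatrix b b φ = A := by
    rw [hφ, ← htoLin, LinearMap.toMatrix_toLin]
  have hchar : φ.charpoly = A.charpoly := by
    rw [← LinearMap.charpoly_toMatrix φ b, hmat]
  have hker : LinearMap.ker (φ ^ k) ≤ φ.maxGenEigenspace 0 := by
    intro x hx
    rw [Module.End.mem_maxGenEigenspace]
    exact ⟨k, by simpa using hx⟩
  have h1 : finrank ℚ (LinearMap.ker (φ ^ k)) ≤ A.charpoly.natTrailingDegree := by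
    calc finrank ℚ (LinearMap.ker (φ ^ k))
        ≤ finrank ℚ (φ.maxGenEigenspace 0) := Submodule.finrank_mono hker
      _ = A.charpoly.natTrailingDegree := by
          rw [LinearMap.finrank_maxGenEigenspace_zero_eq, hchar]
  have h2 := LinearMap.finrank_range_add_finrank_ker (φ ^ k)
  rw [Module.finrank_pi] at h2
  simp only [Fintype.card_fin] at h2
  omega

/-- If `p` divides `c` modulo 2, with `p` monic of degree `d` with odd constant term and `c`
monic of degree `m`, then some coefficient of `c` of index at most `m - d` is odd. -/
private lemma exists_odd_coeff (p c : Polynomial ℤ) (d m : ℕ) (hp : p.Monic)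
    (hpd : p.natDegree = d) (hodd : Odd (p.coeff 0)) (hc : c.Monic) (hcm : c.natDegree = m)
    (hdvd : p.map (Int.castRingHom (ZMod 2)) ∣ c.map (Int.castRingHom (ZMod 2))) :
    ∃ i, i ≤ m - d ∧ Odd (c.coeff i) := by
  by_contra hcon
  push_neg at hcon
  set f := Int.castRingHom (ZMod 2) with hf
  have hXdvd : (X : (ZMod 2)[X]) ^ (m - d + 1) ∣ c.map f := by
    rw [X_pow_dvd_iff]
    intro i hi
    rw [coeff_map]
    have h2 : (2 : ℤ) ∣ c.coeff i := by
      rcases Int.even_or_odd (c.coeff i) with he | ho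
      · exact he.two_dvd
      · exact absurd ho (hcon i (by omega))
    simpa [hf, ZMod.intCast_zmod_eq_zero_iff_dvd] using h2
  obtain ⟨q, hq⟩ := hdvd
  have hpm0 : (p.map f).coeff 0 ≠ 0 := by
    rw [coeff_map]
    intro h0
    rw [hf, eq_intCast, ZMod.intCast_zmod_eq_zero_iff_dvd] at h0
    have h2 : (2:ℤ) ∣ p.coeff 0 := by exact_mod_cast h0
    rw [Int.odd_iff] at hodd
    omega
  have hXp : ¬ (X : (ZMod 2)[X]) ∣ p.map f := by
    rw [X_dvd_iff]
    exact hpm0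
  have hXq : (X : (ZMod 2)[X]) ^ (m - d + 1) ∣ q :=
    Polynomial.prime_X.pow_dvd_of_dvd_mul_left _ hXp (hq ▸ hXdvd)
  have hq0 : q ≠ 0 := by
    rintro rfl
    rw [mul_zero] at hq
    exact (hc.map f).ne_zero hq
  have hdegq : q.natDegree = m - d ∧ d ≤ m := by
    have h1 : (c.map f).natDegree = m := by rw [hc.natDegree_map, hcm]
    have h2 : (p.map f).natDegree = d := by rw [hp.natDegree_map, hpd]
    have h3 := natDegree_mul (hp.map f).ne_zero hq0
    rw [← hq, h1, h2] at h3
    omega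
  have hle := Polynomial.natDegree_le_of_dvd hXq hq0
  rw [natDegree_X_pow] at hle
  omega

/-- Rank bound for powers of an integer matrix with a suitably odd coefficient in its
characteristic polynomial. -/
private lemma rank_bound (m d : ℕ) (C : Matrix (Fin m) (Fin m) ℤ) (hdm : d ≤ m)
    (hoddc : ∃ i, i ≤ m - d ∧ Odd (C.charpoly.coeff i)) (k : ℕ) :
    d ≤ ((C.map (Int.cast : ℤ → ℚ)) ^ k).rank := by
  obtain ⟨i, hi, ho⟩ := hoddc
  have hch : (C.map (Int.cast : ℤ → ℚ)).charpoly = C.charpoly.map (Int.castRingHom ℚ) :=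
    Matrix.charpoly_map C (Int.castRingHom ℚ)
  have hnt : (C.map (Int.cast : ℤ → ℚ)).charpoly.natTrailingDegree ≤ m - d := by
    rw [hch]
    refine le_trans (natTrailingDegree_le_of_ne_zero (n := i) ?_) hi
    rw [coeff_map, eq_intCast, Int.cast_ne_zero]
    intro h0
    rw [h0] at ho
    simp [Int.odd_iff] at ho
  have := rank_pow_ge_ntd (C.map (Int.cast : ℤ → ℚ)) k
  omega

private noncomputable def Pm (m : ℕ) : Matrix (Fin m ⊕ Fin m) (Fin m ⊕ Fin m) ℚ :=
  Matrix.fromBlocks 1 1 1 (-1)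

private lemma hPP (m : ℕ) : (Pm m) * Pm m = (2 : ℚ) • 1 := by
  rw [Pm, Matrix.fromBlocks_multiply, ← Matrix.fromBlocks_one, Matrix.fromBlocks_smul]
  congr 1 <;> simp [two_smul]

private lemma hPdet (m : ℕ) : IsUnit (Pm m).det := by
  have h := congrArg Matrix.det (hPP m)
  rw [Matrix.det_mul, Matrix.det_smul, Matrix.det_one, mul_one] at h
  have h2 : ((2:ℚ) ^ Fintype.card (Fin m ⊕ Fin m)) ≠ 0 := by positivity
  rw [isUnit_iff_ne_zero]
  intro h0
  rw [h0, mul_zero] at h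
  exact h2 h.symm

private lemma hPM {m : ℕ} (Xq Yq : Matrix (Fin m) (Fin m) ℚ) :
    Pm m * Matrix.fromBlocks Xq Yq Yq Xq
      = Matrix.fromBlocks (Xq + Yq) 0 0 (Xq - Yq) * Pm m := by
  rw [Pm, Matrix.fromBlocks_multiply, Matrix.fromBlocks_multiply]
  congr 1 <;> simp [add_comm, sub_eq_add_neg]

private lemma hDpow {m : ℕ} (A B : Matrix (Fin m) (Fin m) ℚ) (k : ℕ) :
    (Matrix.fromBlocks A 0 0 B) ^ k = Matrix.fromBlocks (A ^ k) 0 0 (B ^ k) := by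
  induction k with
  | zero => simp [Matrix.fromBlocks_one]
  | succ k ih => rw [pow_succ, pow_succ, pow_succ, ih, Matrix.fromBlocks_multiply]; simp

private lemma hPMk {m : ℕ} (Xq Yq : Matrix (Fin m) (Fin m) ℚ) (k : ℕ) :
    Pm m * (Matrix.fromBlocks Xq Yq Yq Xq) ^ k
      = (Matrix.fromBlocks (Xq + Yq) 0 0 (Xq - Yq)) ^ k * Pm m := by
  induction k with
  | zero => simp
  | succ k ih =>
    rw [pow_succ, ← mul_assoc, ih, mul_assoc, hPM, pow_succ, mul_assoc]

private lemma rank_block_pow {m : ℕ} (Xq Yq : Matrix (Fin m) (Fin m) ℚ) (k : ℕ) :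
    ((Matrix.fromBlocks Xq Yq Yq Xq) ^ k).rank
      = ((Xq + Yq) ^ k).rank + ((Xq - Yq) ^ k).rank := by
  have h1 : ((Matrix.fromBlocks Xq Yq Yq Xq) ^ k).rank
      = (Pm m * (Matrix.fromBlocks Xq Yq Yq Xq) ^ k).rank :=
    (Matrix.rank_mul_eq_right_of_isUnit_det (Pm m) _ (hPdet m)).symm
  rw [h1, hPMk, Matrix.rank_mul_eq_left_of_isUnit_det _ _ (hPdet m), hDpow,
    rank_fromBlocks_diag]

theorem block_matrix_eventual_rank_ge_two_d
    (m : ℕ) (X Y : Matrix (Fin m) (Fin m) ℤ) (p : Polynomial ℤ) (d : ℕ)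
    (hmonic : p.Monic) (hdeg : p.natDegree = d) (hodd : Odd (p.coeff 0))
    (hdvd : p ∣ (X + Y).charpoly) :
    (∀ k : ℕ, 2 * d ≤ (((Matrix.fromBlocks X Y Y X).map (Int.cast : ℤ → ℚ)) ^ k).rank) ∧
      2 * d ≤ (((Matrix.fromBlocks X Y Y X).map (Int.cast : ℤ → ℚ)) ^ (2 * m)).rank := by
  have main : ∀ k : ℕ, 2 * d ≤ (((Matrix.fromBlocks X Y Y X).map (Int.cast : ℤ → ℚ)) ^ k).rank := by
    intro k
    set f2 := Int.castRingHom (ZMod 2) with hf2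
    -- degrees
    have hdm : d ≤ m := by
      have h1 : (X + Y).charpoly.natDegree = m := by
        rw [Matrix.charpoly_natDegree_eq_dim, Fintype.card_fin]
      have := Polynomial.natDegree_le_of_dvd hdvd (X + Y).charpoly_monic.ne_zero
      omega
    -- odd coefficients for X + Y
    have hoddP : ∃ i, i ≤ m - d ∧ Odd ((X + Y).charpoly.coeff i) := by
      refine exists_odd_coeff p _ d m hmonic hdeg hodd (X + Y).charpoly_monic
        (by rw [Matrix.charpoly_natDegree_eq_dim, Fintype.card_fin]) ?_
      exact Polynomial.map_dvd f2 hdvd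
    -- mod 2, X - Y and X + Y agree
    have hmapeq : (X - Y).map f2 = (X + Y).map f2 := by
      ext i j
      simp only [Matrix.map_apply, Matrix.sub_apply, Matrix.add_apply, map_sub, map_add]
      rw [sub_eq_add_neg, CharTwo.neg_eq]
    -- odd coefficients for X - Y
    have hoddM : ∃ i, i ≤ m - d ∧ Odd ((X - Y).charpoly.coeff i) := by
      refine exists_odd_coeff p _ d m hmonic hdeg hodd (X - Y).charpoly_monic
        (by rw [Matrix.charpoly_natDegree_eq_dim, Fintype.card_fin]) ?_
      have h1 : (X - Y).charpoly.map f2 = (X + Y).charpoly.map f2 := by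
        rw [← Matrix.charpoly_map, ← Matrix.charpoly_map, hmapeq]
      rw [h1]
      exact Polynomial.map_dvd f2 hdvd
    -- rank bounds for the two blocks
    have hrP := rank_bound m d (X + Y) hdm hoddP k
    have hrM := rank_bound m d (X - Y) hdm hoddM k
    -- assemble
    have hMq : (Matrix.fromBlocks X Y Y X).map (Int.cast : ℤ → ℚ)
        = Matrix.fromBlocks (X.map (Int.cast : ℤ → ℚ)) (Y.map (Int.cast : ℤ → ℚ))
            (Y.map (Int.cast : ℤ → ℚ)) (X.map (Int.cast : ℤ → ℚ)) :=
      Matrix.fromBlocks_map X Y Y X _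
    have hadd : X.map (Int.cast : ℤ → ℚ) + Y.map (Int.cast : ℤ → ℚ)
        = (X + Y).map (Int.cast : ℤ → ℚ) := by
      ext i j; simp
    have hsub : X.map (Int.cast : ℤ → ℚ) - Y.map (Int.cast : ℤ → ℚ)
        = (X - Y).map (Int.cast : ℤ → ℚ) := by
      ext i j; simp
    rw [hMq, rank_block_pow, hadd, hsub]
    omega
  exact ⟨main, main (2 * m)⟩
end

section
/- Let X be a compact metric space and R ⊆ X × X a relation that is topologically closed, reflexive, and symmetric. Suppose there exists B ∈ ℕ such that every R-chain x₁ R x₂ R ⋯ R x_n satisfies #{x₁,…,x_n} ≤ B. Then the transitive closure of R is a closed equivalence relation on X. -/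
section Aux

variable {X : Type*} (R : X → X → Prop)

/-- A chain of `n` steps from `x` to `y`. -/
def ChainP (n : ℕ) (x y : X) : Prop :=
  ∃ f : Fin (n + 1) → X, f 0 = x ∧ f (Fin.last n) = y ∧
    ∀ i : Fin n, R (f i.castSucc) (f i.succ)

variable {R}

theorem chainP_of_transGen {x y : X} (h : Relation.TransGen R x y) :
    ∃ n, ChainP R n x y := by
  induction h with
  | @single b hxb =>
    exact ⟨1, ![x, b], rfl, rfl, fun i => by fin_cases i; simpa⟩
  | @tail b c hxb hbc ih =>
    obtain ⟨n, f, h0, hl, hf⟩ := ih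
    refine ⟨n + 1, Fin.snoc f c, ?_, ?_, ?_⟩
    · rw [show (0 : Fin (n+2)) = Fin.castSucc 0 by rfl, Fin.snoc_castSucc]; exact h0
    · simp [Fin.snoc_last]
    · intro i
      refine Fin.lastCases ?_ (fun j => ?_) i
      · rw [Fin.succ_last, Fin.snoc_last, Fin.snoc_castSucc, hl]
        exact hbc
      · rw [Fin.succ_castSucc, Fin.snoc_castSucc, Fin.snoc_castSucc]
        exact hf j

theorem transGen_of_chainP (hrefl : ∀ x, R x x) :
    ∀ n (x y : X), ChainP R n x y → Relation.TransGen R x y := by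
  intro n
  induction n with
  | zero =>
    rintro x y ⟨f, h0, hl, -⟩
    have : x = y := by rw [← h0, ← hl]; rfl
    exact this ▸ Relation.TransGen.single (hrefl x)
  | succ n ih =>
    rintro x y ⟨f, h0, hl, hf⟩
    have h1 : Relation.TransGen R x (f (Fin.last n).castSucc) := by
      refine ih x _ ⟨f ∘ Fin.castSucc, h0, rfl, fun i => ?_⟩
      have := hf i.castSucc
      rw [Fin.succ_castSucc] at this
      exact this
    have h2 : R (f (Fin.last n).castSucc) y := by
      have := hf (Fin.last n)
      rwa [Fin.succ_last, hl] at this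
    exact h1.tail h2

theorem chainP_shorten {B : ℕ}
    (hB : ∀ (n : ℕ) (x : Fin (n + 1) → X),
      (∀ i : Fin n, R (x i.castSucc) (x i.succ)) → (Set.range x).ncard ≤ B) :
    ∀ n (x y : X), ChainP R n x y → ∃ m, m ≤ B ∧ ChainP R m x y := by
  intro n
  induction n using Nat.strong_induction_on with
  | _ n ih =>
  rintro x y ⟨f, h0, hl, hf⟩
  by_cases hinj : Function.Injective f
  · refine ⟨n, ?_, f, h0, hl, hf⟩
    have hcard : (Set.range f).ncard = n + 1 := by
      have := Nat.card_range_of_injective hinj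
      simpa [Set.ncard_eq_toFinset_card', Nat.card_coe_set_eq] using this
    have := hB n f hf
    omega
  · have hrep : ∃ i j : Fin (n + 1), (i : ℕ) < (j : ℕ) ∧ f i = f j := by
      simp only [Function.Injective, not_forall] at hinj
      obtain ⟨i, j, hij, hne⟩ := hinj
      rcases lt_or_gt_of_ne (fun h : (i : ℕ) = (j : ℕ) => hne (Fin.ext h)) with h | h
      · exact ⟨i, j, h, hij⟩
      · exact ⟨j, i, h, hij.symm⟩
    obtain ⟨i, j, hlt, hij⟩ := hrep
    have hi : (i : ℕ) < n + 1 := i.isLt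
    have hj : (j : ℕ) < n + 1 := j.isLt
    set d : ℕ := (j : ℕ) - (i : ℕ) with hd
    set m : ℕ := n - d with hm
    have hd1 : 1 ≤ d := by omega
    have hdn : d ≤ n := by omega
    have hmd : m + d = n := by omega
    have hf' : ∀ a b (hab : b = a + 1) (hb : b ≤ n), R (f ⟨a, by omega⟩) (f ⟨b, by omega⟩) := by
      intro a b hab hb
      subst hab
      exact hf ⟨a, by omega⟩
    set g : Fin (m + 1) → X := fun k =>
      if (k : ℕ) ≤ (i : ℕ) then f ⟨(k : ℕ), by omega⟩ else f ⟨(k : ℕ) + d, by omega⟩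
      with hg
    have hchain : ChainP R m x y := by
      refine ⟨g, ?_, ?_, ?_⟩
      · simp only [hg]
        rw [if_pos (by simp)]
        simpa using h0
      · simp only [hg]
        by_cases hmi : m ≤ (i : ℕ)
        · rw [if_pos (by simpa using hmi)]
          have him : (i : ℕ) = m := by omega
          have hjn : (j : ℕ) = n := by omega
          have : f ⟨(Fin.last m : Fin (m+1)) , by omega⟩ = f i := by
            congr 1; exact Fin.ext (by simp [him])
          rw [this, hij, ← hl]
          congr 1; exact Fin.ext (by simp [hjn])
        · rw [if_neg (by simpa using hmi)]
          rw [← hl]; congr 1; exact Fin.ext (by simp [hmd])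
      · intro k
        have hk : (k : ℕ) < m := k.isLt
        simp only [hg, Fin.coe_castSucc, Fin.val_succ]
        by_cases h1 : (k : ℕ) + 1 ≤ (i : ℕ)
        · rw [if_pos (by omega), if_pos h1]
          exact hf' k (k + 1) rfl (by omega)
        · by_cases h2 : (k : ℕ) ≤ (i : ℕ)
          · -- k = i
            have hki : (k : ℕ) = (i : ℕ) := by omega
            rw [if_pos h2, if_neg h1]
            have : f ⟨(k : ℕ), by omega⟩ = f ⟨(k : ℕ) + d, by omega⟩ := by
              rw [show (⟨(k : ℕ), by omega⟩ : Fin (n+1)) = i from Fin.ext (by simp [hki]),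
                hij]
              congr 1; exact Fin.ext (by simp [hki]; omega)
            rw [this]
            exact hf' ((k : ℕ) + d) ((k : ℕ) + 1 + d) (by omega) (by omega)
          · rw [if_neg h2, if_neg h1]
            exact hf' ((k : ℕ) + d) ((k : ℕ) + 1 + d) (by omega) (by omega)
    exact ih m (by omega) x y hchain

end Aux

theorem transitive_closure_closed_equivalence
    (X : Type*) [MetricSpace X] [CompactSpace X]
    (R : X → X → Prop)
    (hclosed : IsClosed {p : X × X | R p.1 p.2})
    (hrefl : ∀ x, R x x) (hsymm : ∀ x y, R x y → R y x)
    (B : ℕ)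
    (hB : ∀ (n : ℕ) (x : Fin (n + 1) → X),
      (∀ i : Fin n, R (x i.castSucc) (x i.succ)) → (Set.range x).ncard ≤ B) :
    Equivalence (Relation.TransGen R) ∧
      IsClosed {p : X × X | Relation.TransGen R p.1 p.2} := by
  have hsymmT : ∀ a b : X, Relation.TransGen R a b → Relation.TransGen R b a := by
    intro a b h
    induction h with
    | single h => exact Relation.TransGen.single (hsymm _ _ h)
    | tail _ h2 ih => exact Relation.TransGen.trans (Relation.TransGen.single (hsymm _ _ h2)) ih
  constructor
  · exact ⟨fun x => Relation.TransGen.single (hrefl x),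
      fun {a b} h => hsymmT a b h,
      fun {a b c} h1 h2 => Relation.TransGen.trans h1 h2⟩
  · have hclosedChain : ∀ n, IsClosed {p : X × X | ChainP R n p.1 p.2} := by
      intro n
      have hK : IsClosed {f : Fin (n + 1) → X | ∀ i : Fin n, R (f i.castSucc) (f i.succ)} := by
        have : {f : Fin (n + 1) → X | ∀ i : Fin n, R (f i.castSucc) (f i.succ)} =
            ⋂ i : Fin n, (fun f : Fin (n+1) → X => ((f i.castSucc, f i.succ) : X × X)) ⁻¹'
              {p : X × X | R p.1 p.2} := by
          ext f; simp [Set.mem_iInter]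
        rw [this]
        exact isClosed_iInter fun i =>
          hclosed.preimage ((continuous_apply _).prodMk (continuous_apply _))
      have hKc : IsCompact {f : Fin (n + 1) → X | ∀ i : Fin n, R (f i.castSucc) (f i.succ)} :=
        hK.isCompact
      have himg : {p : X × X | ChainP R n p.1 p.2} =
          (fun f : Fin (n+1) → X => ((f 0, f (Fin.last n)) : X × X)) ''
            {f : Fin (n + 1) → X | ∀ i : Fin n, R (f i.castSucc) (f i.succ)} := by
        ext ⟨a, b⟩
        constructor
        · rintro ⟨f, h0, hl, hf⟩
          exact ⟨f, hf, by simp [h0, hl]⟩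
        · rintro ⟨f, hf, heq⟩
          simp only [Prod.mk.injEq] at heq
          exact ⟨f, heq.1, heq.2, hf⟩
      rw [himg]
      exact (hKc.image ((continuous_apply _).prodMk (continuous_apply _))).isClosed
    have hunion : {p : X × X | Relation.TransGen R p.1 p.2} =
        ⋃ n ∈ Finset.range (B + 1), {p : X × X | ChainP R n p.1 p.2} := by
      ext ⟨a, b⟩
      simp only [Set.mem_setOf_eq, Set.mem_iUnion, Finset.mem_range]
      constructor
      · intro h
        obtain ⟨n, hn⟩ := chainP_of_transGen h
        obtain ⟨m, hmB, hm⟩ := chainP_shorten hB n a b hn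
        exact ⟨m, by omega, hm⟩
      · rintro ⟨n, -, hn⟩
        exact transGen_of_chainP hrefl n a b hn
    rw [hunion]
    exact isClosed_biUnion_finset fun n _ => hclosedChain n
end

section
/- Let f : X → Y be a continuous surjection between compact metric spaces, and suppose there is δ > 0 such that every fiber f⁻¹(y) consists of exactly two points at distance at least δ from each other. Then f is a 2-to-1 covering map: every point of Y has an open neighborhood U such that f⁻¹(U) is a disjoint union of two open sets each mapped homeomorphically onto U by f. -/
/-- Auxiliary lemma: a sheet of a covering is homeomorphic to the base set. -/
lemma aux_sheet_homeo {X Y : Type*} [TopologicalSpace X] [TopologicalSpace Y]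
    (f : X → Y) (hf : Continuous f) (hcl : IsClosedMap f)
    (U : Set Y) (hU : IsOpen U) (V₁ V₂ : Set X) (hV₁ : IsOpen V₁) (hV₂ : IsOpen V₂)
    (hdisj : Disjoint V₁ V₂) (hpre : f ⁻¹' U = V₁ ∪ V₂)
    (hfib : ∀ u ∈ U, ∃ a ∈ V₁, ∃ b ∈ V₂, f ⁻¹' {u} = {a, b}) :
    ∃ e : V₁ ≃ₜ U, ∀ x : V₁, (e x : Y) = f x := by
  have hmem : ∀ x : V₁, f x ∈ U := by
    intro x
    have : (x : X) ∈ f ⁻¹' U := by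
      rw [hpre]; exact Or.inl x.2
    exact this
  set g : V₁ → U := fun x => ⟨f x, hmem x⟩ with hg
  have hginj : Function.Injective g := by
    intro x x' h
    have hfx : f (x : X) = f (x' : X) := congrArg Subtype.val h
    obtain ⟨a, ha, b, hb, hab⟩ := hfib (f x) (hmem x)
    have hx : (x : X) ∈ ({a, b} : Set X) := by rw [← hab]; rfl
    have hx' : (x' : X) ∈ ({a, b} : Set X) := by
      rw [← hab]; exact hfx.symm
    have hbn : b ∉ V₁ := fun hbV => (hdisj.le_bot ⟨hbV, hb⟩)
    have hxa : (x : X) = a := by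
      rcases hx with h | h
      · exact h
      · exact absurd (h ▸ x.2) hbn
    have hx'a : (x' : X) = a := by
      rcases hx' with h | h
      · exact h
      · exact absurd (h ▸ x'.2) hbn
    exact Subtype.ext (hxa.trans hx'a.symm)
  have hgsurj : Function.Surjective g := by
    rintro ⟨u, hu⟩
    obtain ⟨a, ha, b, hb, hab⟩ := hfib u hu
    have : a ∈ f ⁻¹' {u} := by rw [hab]; exact Or.inl rfl
    exact ⟨⟨a, ha⟩, Subtype.ext this⟩
  have hgcont : Continuous g := (hf.comp continuous_subtype_val).subtype_mk _
  -- key: f maps open subsets of V₁ to open sets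
  have hopen : ∀ W : Set X, IsOpen W → W ⊆ V₁ → IsOpen (f '' W) := by
    intro W hW hWV
    have key : f '' W = U ∩ (f '' (W ∪ V₂)ᶜ)ᶜ := by
      ext u
      constructor
      · rintro ⟨x, hxW, rfl⟩
        refine ⟨hmem ⟨x, hWV hxW⟩, ?_⟩
        rintro ⟨z, hz, hfz⟩
        obtain ⟨a, ha, b, hb, hab⟩ := hfib (f x) (hmem ⟨x, hWV hxW⟩)
        have hzf : z ∈ ({a, b} : Set X) := by rw [← hab]; exact hfz
        have hxf : x ∈ ({a, b} : Set X) := by rw [← hab]; rfl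
        have hxa : x = a := by
          rcases hxf with h | h
          · exact h
          · exact absurd (hWV hxW) fun hV => hdisj.le_bot ⟨hV, h ▸ hb⟩
        rcases hzf with h | h
        · exact hz (Or.inl (h ▸ hxa ▸ hxW))
        · exact hz (Or.inr (h ▸ hb))
      · rintro ⟨hu, hnc⟩
        obtain ⟨a, ha, b, hb, hab⟩ := hfib u hu
        have hau : f a = u := by
          have : a ∈ f ⁻¹' {u} := by rw [hab]; exact Or.inl rfl
          exact this
        by_contra hn
        have haW : a ∉ W := fun hw => hn ⟨a, hw, hau⟩
        have haV₂ : a ∉ V₂ := fun hv => hdisj.le_bot ⟨ha, hv⟩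
        exact hnc ⟨a, fun h => h.elim haW haV₂, hau⟩
    rw [key]
    exact hU.inter (hcl _ (hW.union hV₂).isClosed_compl).isOpen_compl
  have hgopen : IsOpenMap g := by
    rw [hU.isOpenEmbedding_subtypeVal.isOpenMap_iff]
    have : (Subtype.val : U → Y) ∘ g = f ∘ (Subtype.val : V₁ → X) := rfl
    rw [this]
    intro s hs
    rw [Set.image_comp]
    have h1 : IsOpen ((Subtype.val : V₁ → X) '' s) :=
      hV₁.isOpenEmbedding_subtypeVal.isOpenMap _ hs
    exact hopen _ h1 (by rintro x ⟨⟨x', hx'⟩, _, rfl⟩; exact hx')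
  refine ⟨Equiv.toHomeomorphOfContinuousOpen
    (Equiv.ofBijective g ⟨hginj, hgsurj⟩) hgcont hgopen, fun x => rfl⟩

theorem two_to_one_separated_fibers_covering
    (X Y : Type*) [MetricSpace X] [CompactSpace X] [MetricSpace Y] [CompactSpace Y]
    (f : X → Y) (hf : Continuous f) (hsurj : Function.Surjective f)
    (δ : ℝ) (hδ : 0 < δ)
    (hfib : ∀ y : Y, ∃ x₁ x₂ : X, x₁ ≠ x₂ ∧ δ ≤ dist x₁ x₂ ∧ f ⁻¹' {y} = {x₁, x₂}) :
    ∀ y : Y, ∃ U : Set Y, IsOpen U ∧ y ∈ U ∧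
      ∃ V₁ V₂ : Set X, IsOpen V₁ ∧ IsOpen V₂ ∧ Disjoint V₁ V₂ ∧
        f ⁻¹' U = V₁ ∪ V₂ ∧
        (∃ e : V₁ ≃ₜ U, ∀ x : V₁, (e x : Y) = f x) ∧
        (∃ e : V₂ ≃ₜ U, ∀ x : V₂, (e x : Y) = f x) := by
  intro y
  have hcl : IsClosedMap f := hf.isClosedMap
  obtain ⟨x₁, x₂, hne, hdist, hfy⟩ := hfib y
  set B₁ : Set X := Metric.ball x₁ (δ / 3) with hB₁
  set B₂ : Set X := Metric.ball x₂ (δ / 3) with hB₂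
  set U : Set Y := (f '' (B₁ ∪ B₂)ᶜ)ᶜ with hUdef
  have hUopen : IsOpen U :=
    (hcl _ ((Metric.isOpen_ball.union Metric.isOpen_ball)).isClosed_compl).isOpen_compl
  have hyU : y ∈ U := by
    rintro ⟨z, hz, rfl⟩
    have : z ∈ ({x₁, x₂} : Set X) := by rw [← hfy]; rfl
    rcases this with h | h
    · exact hz (Or.inl (by rw [hB₁, h]; exact Metric.mem_ball_self (by linarith)))
    · have h' : z = x₂ := h
      exact hz (Or.inr (by rw [hB₂, h']; exact Metric.mem_ball_self (by linarith)))
  set V₁ : Set X := B₁ ∩ f ⁻¹' U with hV₁def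
  set V₂ : Set X := B₂ ∩ f ⁻¹' U with hV₂def
  have hV₁open : IsOpen V₁ := Metric.isOpen_ball.inter (hUopen.preimage hf)
  have hV₂open : IsOpen V₂ := Metric.isOpen_ball.inter (hUopen.preimage hf)
  have hBdisj : Disjoint B₁ B₂ := by
    rw [Set.disjoint_left]
    intro z hz1 hz2
    have : dist x₁ x₂ < δ := by
      calc dist x₁ x₂ ≤ dist x₁ z + dist z x₂ := dist_triangle _ _ _
        _ < δ / 3 + δ / 3 := by
            have h1 : dist z x₁ < δ / 3 := hz1
            have h2 : dist z x₂ < δ / 3 := hz2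
            rw [dist_comm x₁ z]
            exact add_lt_add h1 h2
        _ < δ := by linarith
    linarith [hdist]
  have hdisj : Disjoint V₁ V₂ :=
    hBdisj.mono (Set.inter_subset_left) (Set.inter_subset_left)
  have hpre : f ⁻¹' U = V₁ ∪ V₂ := by
    ext x
    constructor
    · intro hx
      have hxB : x ∈ B₁ ∪ B₂ := by
        by_contra h
        exact hx ⟨x, h, rfl⟩
      rcases hxB with h | h
      · exact Or.inl ⟨h, hx⟩
      · exact Or.inr ⟨h, hx⟩
    · rintro (⟨_, hx⟩ | ⟨_, hx⟩) <;> exact hx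
  have hfib' : ∀ u ∈ U, ∃ a ∈ V₁, ∃ b ∈ V₂, f ⁻¹' {u} = {a, b} := by
    intro u hu
    obtain ⟨a, b, hab, habd, hfab⟩ := hfib u
    have haU : a ∈ f ⁻¹' U := by
      have : f a = u := by
        have : a ∈ f ⁻¹' {u} := by rw [hfab]; exact Or.inl rfl
        exact this
      simpa [this] using hu
    have hbU : b ∈ f ⁻¹' U := by
      have : f b = u := by
        have : b ∈ f ⁻¹' {u} := by rw [hfab]; exact Or.inr rfl
        exact this
      simpa [this] using hu
    have haU' := haU
    have hbU' := hbU
    rw [hpre] at haU' hbU'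
    have haB : a ∈ B₁ ∪ B₂ := by
      rcases haU' with h | h
      · exact Or.inl h.1
      · exact Or.inr h.1
    have hbB : b ∈ B₁ ∪ B₂ := by
      rcases hbU' with h | h
      · exact Or.inl h.1
      · exact Or.inr h.1
    have hnotsame : ∀ c : X, ¬ (a ∈ Metric.ball c (δ/3) ∧ b ∈ Metric.ball c (δ/3)) := by
      rintro c ⟨h1, h2⟩
      have : dist a b < δ := by
        calc dist a b ≤ dist a c + dist c b := dist_triangle _ _ _
          _ < δ / 3 + δ / 3 := by
              rw [dist_comm c b]
              exact add_lt_add h1 h2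
          _ < δ := by linarith
      linarith [habd]
    rcases haB with ha1 | ha2
    · rcases hbB with hb1 | hb2
      · exact absurd ⟨ha1, hb1⟩ (hnotsame x₁)
      · exact ⟨a, ⟨ha1, haU⟩, b, ⟨hb2, hbU⟩, hfab⟩
    · rcases hbB with hb1 | hb2
      · refine ⟨b, ⟨hb1, hbU⟩, a, ⟨ha2, haU⟩, ?_⟩
        rw [hfab]; exact Set.pair_comm a b
      · exact absurd ⟨ha2, hb2⟩ (hnotsame x₂)
  have hfib'' : ∀ u ∈ U, ∃ a ∈ V₂, ∃ b ∈ V₁, f ⁻¹' {u} = {a, b} := by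
    intro u hu
    obtain ⟨a, ha, b, hb, hab⟩ := hfib' u hu
    exact ⟨b, hb, a, ha, by rw [hab]; exact Set.pair_comm a b⟩
  exact ⟨U, hUopen, hyU, V₁, V₂, hV₁open, hV₂open, hdisj, hpre,
    aux_sheet_homeo f hf hcl U hUopen V₁ V₂ hV₁open hV₂open hdisj hpre hfib',
    aux_sheet_homeo f hf hcl U hUopen V₂ V₁ hV₂open hV₁open hdisj.symm
      (by rw [hpre, Set.union_comm]) hfib''⟩
end
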